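/- arXiv:1303.3491 — 2 statements merged into one kernel-verified Lean document; each statement's English description precedes it below -/
import Mathlib

section
/- Let n ≥ 1 and σ ∈ B_n. Then for every 1 ≤ i ≤ n, the integers f_i(σ^{-1}) and f_{|σ^{-1}(i)|}(σ) have the same parity. -/
open MvPolynomial

/-- The hyperoctahedral group `Bₙ`, realized as the subgroup of permutations of `ℤ`
that commute with negation and fix every integer of absolute value greater than `n`.
Such a permutation restricts to a bijection `σ` of `{-n,…,-1,1,…,n}` with
`σ(-k) = -σ(k)`, and every such bijection arises from a unique element. -/
def HOct (n : ℕ) : Subgroup (Equiv.Perm ℤ) where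
  carrier := {σ | (∀ k : ℤ, σ (-k) = -(σ k)) ∧ ∀ k : ℤ, (n : ℤ) < |k| → σ k = k}
  one_mem' := by
    refine ⟨fun k => rfl, fun k _ => rfl⟩
  mul_mem' := by
    rintro σ τ ⟨hσ1, hσ2⟩ ⟨hτ1, hτ2⟩
    refine ⟨fun k => ?_, fun k hk => ?_⟩
    · simp [Equiv.Perm.mul_apply, hτ1, hσ1]
    · simp [Equiv.Perm.mul_apply, hτ2 k hk, hσ2 k hk]
  inv_mem' := by
    rintro σ ⟨h1, h2⟩
    refine ⟨fun k => ?_, fun k hk => ?_⟩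
    · apply σ.injective
      rw [Equiv.Perm.coe_inv, Equiv.apply_symm_apply, h1, Equiv.apply_symm_apply]
    · have h := h2 k hk
      nth_rewrite 1 [← h]
      rw [Equiv.Perm.coe_inv, Equiv.symm_apply_apply]

/-- The descent set `Des(σ) = {1 ≤ i ≤ n-1 : σ(i) > σ(i+1)}`. -/
def DesB (n : ℕ) (σ : Equiv.Perm ℤ) : Finset ℕ :=
  (Finset.Ico 1 n).filter fun i => σ ((i : ℤ) + 1) < σ (i : ℤ)

/-- `d_i(σ) = #{j ∈ Des(σ) : j ≥ i}`. -/
def dB (n : ℕ) (σ : Equiv.Perm ℤ) (i : ℕ) : ℕ :=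
  ((DesB n σ).filter fun j => i ≤ j).card

/-- `ε_i(σ)`: `1` if `σ(i) < 0`, `0` otherwise. -/
def epsB (σ : Equiv.Perm ℤ) (i : ℕ) : ℕ := if σ (i : ℤ) < 0 then 1 else 0

/-- `f_i(σ) = 2 d_i(σ) + ε_i(σ)`. -/
def fB (n : ℕ) (σ : Equiv.Perm ℤ) (i : ℕ) : ℕ := 2 * dB n σ i + epsB σ i

/-- The sign `σ(k)/|σ(k)|` as a rational number. -/
def sgnQ (σ : Equiv.Perm ℤ) (k : ℤ) : ℚ := if σ k < 0 then -1 else 1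

/-- For `i : Fin n` (representing the index `i+1 ∈ {1,…,n}`), the element of `Fin n`
representing `|σ(i+1)| ∈ {1,…,n}`. -/
def sIdx {n : ℕ} (σ : Equiv.Perm ℤ) (i : Fin n) : Fin n :=
  ⟨((σ ((i : ℕ) + 1 : ℤ)).natAbs - 1) % n, Nat.mod_lt _ i.pos⟩

/-- The diagonal action of a signed permutation on `ℚ[x₁,…,xₙ,y₁,…,yₙ]`:
`x_k ↦ (σ(k)/|σ(k)|)·x_{|σ(k)|}` and `y_k ↦ (σ(k)/|σ(k)|)·y_{|σ(k)|}`.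
Here `Sum.inl i` is the variable `x_{i+1}` and `Sum.inr i` is `y_{i+1}`. -/
noncomputable def actXY (n : ℕ) (σ : Equiv.Perm ℤ) :
    MvPolynomial (Fin n ⊕ Fin n) ℚ →ₐ[ℚ] MvPolynomial (Fin n ⊕ Fin n) ℚ :=
  aeval (Sum.elim
    (fun i => C (sgnQ σ ((i : ℕ) + 1 : ℤ)) * X (Sum.inl (sIdx σ i)))
    (fun i => C (sgnQ σ ((i : ℕ) + 1 : ℤ)) * X (Sum.inr (sIdx σ i))))

/-- Action of a signed permutation on the `x`-variables only. -/
noncomputable def actX (n : ℕ) (σ : Equiv.Perm ℤ) :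
    MvPolynomial (Fin n ⊕ Fin n) ℚ →ₐ[ℚ] MvPolynomial (Fin n ⊕ Fin n) ℚ :=
  aeval (Sum.elim
    (fun i => C (sgnQ σ ((i : ℕ) + 1 : ℤ)) * X (Sum.inl (sIdx σ i)))
    (fun i => X (Sum.inr i)))

/-- Action of a signed permutation on the `y`-variables only. -/
noncomputable def actY (n : ℕ) (σ : Equiv.Perm ℤ) :
    MvPolynomial (Fin n ⊕ Fin n) ℚ →ₐ[ℚ] MvPolynomial (Fin n ⊕ Fin n) ℚ :=
  aeval (Sum.elim
    (fun i => X (Sum.inl i))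
    (fun i => C (sgnQ σ ((i : ℕ) + 1 : ℤ)) * X (Sum.inr (sIdx σ i))))

/-- The averaging operator `ρ(f) = (1/|Bₙ|) ∑_{σ ∈ Bₙ} σ·f`. -/
noncomputable def rho (n : ℕ) (f : MvPolynomial (Fin n ⊕ Fin n) ℚ) :
    MvPolynomial (Fin n ⊕ Fin n) ℚ :=
  (Nat.card ↥(HOct n) : ℚ)⁻¹ • ∑ᶠ σ : ↥(HOct n), actXY n (σ : Equiv.Perm ℤ) f

/-- The diagonal signed descent monomial
`c_σ = ∏_{i=1}^n x_i^{f_i(σ⁻¹)} y_i^{f_{|σ⁻¹(i)|}(σ)}`. -/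
noncomputable def cMon (n : ℕ) (σ : Equiv.Perm ℤ) : MvPolynomial (Fin n ⊕ Fin n) ℚ :=
  ∏ i : Fin n,
    (X (Sum.inl i) ^ fB n σ⁻¹ ((i : ℕ) + 1) *
      X (Sum.inr i) ^ fB n σ ((σ⁻¹ ((i : ℕ) + 1 : ℤ)).natAbs))

/-- The monomial `x^p y^q`. -/
noncomputable def monXY (n : ℕ) (p q : Fin n → ℕ) : MvPolynomial (Fin n ⊕ Fin n) ℚ :=
  (∏ i : Fin n, X (Sum.inl i) ^ p i) * ∏ i : Fin n, X (Sum.inr i) ^ q i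

/-- The monomial `x^p y^q` is ordered (belongs to `𝒪ₙ`). -/
def OrderedMon (n : ℕ) (p q : Fin n → ℕ) : Prop :=
  (∀ k, Even (p k + q k)) ∧ Antitone p ∧
  (∀ (i : Fin n) (h : (i : ℕ) + 1 < n),
    p i = p ⟨(i : ℕ) + 1, h⟩ → Even (p i) → q ⟨(i : ℕ) + 1, h⟩ ≤ q i) ∧
  (∀ (i : Fin n) (h : (i : ℕ) + 1 < n),
    p i = p ⟨(i : ℕ) + 1, h⟩ → Odd (p i) → q i ≤ q ⟨(i : ℕ) + 1, h⟩)

/-- `σ` is the signed index permutation of a monomial with `y`-exponent sequence `q`: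
(1) `q_{|σ(1)|} ≥ ⋯ ≥ q_{|σ(n)|}`; (2) ties `q_{|σ(i)|} = q_{|σ(j)|}` (`i < j`) force
`σ(i) < σ(i+1) < ⋯ < σ(j)`; (3) `q_{|σ(i)|}` is even iff `σ(i) > 0`. -/
def IsSignedIndexPerm (n : ℕ) (q : Fin n → ℕ) (σ : Equiv.Perm ℤ) : Prop :=
  σ ∈ HOct n ∧
  Antitone (fun i : Fin n => q (sIdx σ i)) ∧
  (∀ i j : Fin n, i < j → q (sIdx σ i) = q (sIdx σ j) →
    ∀ k l : Fin n, i ≤ k → k < l → l ≤ j →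
      σ ((k : ℕ) + 1 : ℤ) < σ ((l : ℕ) + 1 : ℤ)) ∧
  (∀ i : Fin n, Even (q (sIdx σ i)) ↔ 0 < σ ((i : ℕ) + 1 : ℤ))

/-- `𝔰(q) = q` if `q` is even, `-q` if `q` is odd. -/
def sFun (q : ℕ) : ℤ := if Even q then (q : ℤ) else -(q : ℤ)

/-- The decreasing rearrangement `𝔬(q)` of a sequence `q`. -/
def oArr {n : ℕ} (q : Fin n → ℕ) : Fin n → ℕ := fun i => q (Tuple.sort q i.rev)

/-- Strict lexicographic comparison of sequences. -/
def LexLT {n : ℕ} {α : Type*} [LT α] (a b : Fin n → α) : Prop :=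
  ∃ i, (∀ j, j < i → a j = b j) ∧ a i < b i

/-- The monomial `x^{p'} y^{q'}` strictly precedes `x^p y^q` in the total order `≼` on
ordered monomials: either `𝔬(x^{p'}y^{q'}) <_ℓ 𝔬(x^p y^q)` lexicographically, or the
`𝔬`-data agree and `(p', 𝔰(q')) <_ℓ (p, 𝔰(q))` lexicographically. -/
def MonPrec {n : ℕ} (p' q' p q : Fin n → ℕ) : Prop :=
  LexLT (oArr p') (oArr p) ∨
  (oArr p' = oArr p ∧ LexLT (oArr q') (oArr q)) ∨
  (oArr p' = oArr p ∧ oArr q' = oArr q ∧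
    (LexLT p' p ∨ (p' = p ∧ LexLT (fun i => sFun (q' i)) (fun i => sFun (q i)))))

/-- The monomial symmetric polynomial `m_{2ν}(x) = ∑_{[α] ∈ Σₙ/Σₙ(ν)} x^{2α(ν)}`,
i.e. the sum of all distinct monomials `x^{2w}` with `w` a rearrangement of `ν`. -/
noncomputable def mSymX (n : ℕ) (ν : Fin n → ℕ) : MvPolynomial (Fin n ⊕ Fin n) ℚ :=
  ∑ w ∈ Finset.image (fun α : Equiv.Perm (Fin n) => ν ∘ α) Finset.univ,
    ∏ i : Fin n, X (Sum.inl i) ^ (2 * w i)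

/-- The monomial symmetric polynomial `m_{2μ}(y)`. -/
noncomputable def mSymY (n : ℕ) (μ : Fin n → ℕ) : MvPolynomial (Fin n ⊕ Fin n) ℚ :=
  ∑ w ∈ Finset.image (fun α : Equiv.Perm (Fin n) => μ ∘ α) Finset.univ,
    ∏ i : Fin n, X (Sum.inr i) ^ (2 * w i)

/-- The action of a signed permutation on `ℚ[x₁,…,xₙ]`:
`x_k ↦ (σ(k)/|σ(k)|)·x_{|σ(k)|}`. Here the variable `i : Fin n` is `x_{i+1}`. -/
noncomputable def actB (n : ℕ) (σ : Equiv.Perm ℤ) :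
    MvPolynomial (Fin n) ℚ →ₐ[ℚ] MvPolynomial (Fin n) ℚ :=
  aeval fun i => C (sgnQ σ ((i : ℕ) + 1 : ℤ)) * X (sIdx σ i)

/-- The signed descent monomial `b_σ = ∏_{i=1}^n x_i^{f_{|σ⁻¹(i)|}(σ)}`. -/
noncomputable def bMon (n : ℕ) (σ : Equiv.Perm ℤ) : MvPolynomial (Fin n) ℚ :=
  ∏ i : Fin n, X i ^ fB n σ ((σ⁻¹ ((i : ℕ) + 1 : ℤ)).natAbs)

/-- For every `σ ∈ Bₙ` and `1 ≤ i ≤ n`, the numbers `f_i(σ⁻¹)` and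
`f_{|σ⁻¹(i)|}(σ)` have the same parity. -/
theorem fB_inv_parity (n : ℕ) (hn : 1 ≤ n) (σ : Equiv.Perm ℤ) (hσ : σ ∈ HOct n) :
    ∀ i : ℕ, 1 ≤ i → i ≤ n →
      fB n σ⁻¹ i ≡ fB n σ ((σ⁻¹ (i : ℤ)).natAbs) [MOD 2] := by
  intro i hi _
  have hneg : ∀ k : ℤ, σ (-k) = -(σ k) := hσ.1
  set j : ℤ := σ⁻¹ (i : ℤ) with hj
  have hji : σ j = (i : ℤ) := Equiv.apply_symm_apply σ (i : ℤ)
  have hipos : (0 : ℤ) < (i : ℤ) := by exact_mod_cast hi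
  have hj0 : j ≠ 0 := by
    intro h
    have h0 : σ (0 : ℤ) = 0 := by
      have := hneg 0; simp at this; linarith [this]
    rw [h, h0] at hji; omega
  have heps : epsB σ⁻¹ i = epsB σ j.natAbs := by
    unfold epsB
    rcases lt_or_gt_of_ne hj0 with hlt | hgt
    · have habs : (j.natAbs : ℤ) = -j := by omega
      have : σ (j.natAbs : ℤ) = -(i : ℤ) := by
        rw [habs, hneg, hji]
      rw [this, if_pos hlt, if_pos (by omega : -(i:ℤ) < 0)]
    · have habs : (j.natAbs : ℤ) = j := by omega
      rw [habs, hji, if_neg hgt.not_gt, if_neg hipos.not_gt]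
  unfold fB
  calc 2 * dB n σ⁻¹ i + epsB σ⁻¹ i ≡ epsB σ⁻¹ i [MOD 2] := by
        simpa using (Nat.ModEq.add_right (epsB σ⁻¹ i)
          ((Nat.modEq_zero_iff_dvd).2 ⟨dB n σ⁻¹ i, rfl⟩))
    _ = epsB σ j.natAbs := heps
    _ ≡ 2 * dB n σ j.natAbs + epsB σ j.natAbs [MOD 2] := by
        simpa using (Nat.ModEq.add_right (epsB σ j.natAbs)
          ((Nat.modEq_zero_iff_dvd).2 ⟨dB n σ j.natAbs, rfl⟩)).symm
end

section
/- Let n ≥ 1. Then for every σ ∈ B_n, the averaged diagonal signed descent monomial ρ(c_σ) is a nonzero element of ℚ[x_1,…,x_n,y_1,…,y_n]. -/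
open MvPolynomial

lemma hoct_bound {n : ℕ} {σ : Equiv.Perm ℤ} (hσ : σ ∈ HOct n) {k : ℤ}
    (hk : |k| ≤ n) : |σ k| ≤ n := by
  by_contra h
  push_neg at h
  have h2 := hσ.2 (σ k) h
  have hkk : σ k = k := σ.injective h2
  rw [hkk] at h
  exact absurd hk (not_le.mpr h)

lemma hoct_finite (n : ℕ) : Finite ↥(HOct n) := by
  have key : ∀ σ : ↥(HOct n), ∀ j : Fin (2*n+1),
      ((σ : Equiv.Perm ℤ) ((j : ℤ) - n) + n).toNat < 2*n+1 := by
    intro σ j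
    have h1 : (j : ℤ) < 2*n+1 := by exact_mod_cast j.2
    have h0 : (0:ℤ) ≤ (j : ℤ) := by positivity
    have hj : |(j : ℤ) - n| ≤ n := by rw [abs_le]; omega
    have hb := hoct_bound σ.2 hj
    rw [abs_le] at hb
    omega
  apply Finite.of_injective (fun σ : ↥(HOct n) =>
    fun j : Fin (2*n+1) => (⟨_, key σ j⟩ : Fin (2*n+1)))
  intro σ τ h
  ext k
  by_cases hk : |k| ≤ (n : ℤ)
  · have hk' : (0:ℤ) ≤ k + n ∧ k + n < 2*n+1 := by rw [abs_le] at hk; constructor <;> omega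
    have hlt : (k + n).toNat < 2*n+1 := by omega
    have hc := congrFun h ⟨(k+n).toNat, hlt⟩
    simp only [Fin.mk.injEq] at hc
    have hcast : (((k+n).toNat : ℤ)) = k + n := Int.toNat_of_nonneg hk'.1
    rw [hcast, add_sub_cancel_right] at hc
    have hbσ := hoct_bound σ.2 hk
    have hbτ := hoct_bound τ.2 hk
    rw [abs_le] at hbσ hbτ
    have e1 : (((σ : Equiv.Perm ℤ) k + n).toNat : ℤ) = (σ : Equiv.Perm ℤ) k + n :=
      Int.toNat_of_nonneg (by omega)
    have e2 : (((τ : Equiv.Perm ℤ) k + n).toNat : ℤ) = (τ : Equiv.Perm ℤ) k + n :=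
      Int.toNat_of_nonneg (by omega)
    have : (((σ : Equiv.Perm ℤ) k + n).toNat : ℤ) = (((τ : Equiv.Perm ℤ) k + n).toNat : ℤ) := by
      exact_mod_cast hc
    omega
  · push_neg at hk
    rw [σ.2.2 k hk, τ.2.2 k hk]

lemma eps_parity {n : ℕ} {σ : Equiv.Perm ℤ} (hσ : σ ∈ HOct n) (i : Fin n) :
    Even (fB n σ⁻¹ ((i:ℕ)+1) + fB n σ ((σ⁻¹ ((i : ℕ) + 1 : ℤ)).natAbs)) := by
  have hzero : σ 0 = 0 := by
    have h := hσ.1 0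
    simp only [neg_zero] at h
    omega
  set m := σ⁻¹ ((i : ℕ) + 1 : ℤ) with hm
  have hσm : σ m = (i : ℕ) + 1 := Equiv.apply_symm_apply σ _
  have hm0 : m ≠ 0 := by
    intro h
    rw [h, hzero] at hσm
    omega
  unfold fB epsB
  have hcast1 : (((i:ℕ)+1 : ℕ) : ℤ) = ((i:ℕ) : ℤ) + 1 := by push_cast; ring
  rcases lt_or_gt_of_ne hm0 with hneg | hpos
  · have h1 : σ⁻¹ ((((i:ℕ)+1 : ℕ)) : ℤ) < 0 := by rw [hcast1]; exact hneg
    have hnat : ((m.natAbs : ℕ) : ℤ) = -m := by omega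
    have h2 : σ ((m.natAbs : ℕ) : ℤ) < 0 := by
      rw [hnat, hσ.1 m, hσm]; omega
    rw [if_pos h1, if_pos h2]
    exact ⟨dB n σ⁻¹ ((i:ℕ)+1) + dB n σ m.natAbs + 1, by ring⟩
  · have h1 : ¬ σ⁻¹ ((((i:ℕ)+1 : ℕ)) : ℤ) < 0 := by rw [hcast1]; omega
    have hnat : ((m.natAbs : ℕ) : ℤ) = m := by omega
    have h2 : ¬ σ ((m.natAbs : ℕ) : ℤ) < 0 := by rw [hnat, hσm]; omega
    rw [if_neg h1, if_neg h2]
    exact ⟨dB n σ⁻¹ ((i:ℕ)+1) + dB n σ m.natAbs, by ring⟩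

lemma sgnQ_sq (σ : Equiv.Perm ℤ) (k : ℤ) : sgnQ σ k ^ 2 = 1 := by
  simp only [sgnQ]; split_ifs <;> norm_num

/-- For every `σ ∈ Bₙ`, the averaged diagonal signed descent monomial `ρ(c_σ)`
is nonzero. -/
theorem rho_cMon_ne_zero (n : ℕ) (hn : 1 ≤ n) :
    ∀ σ ∈ HOct n, rho n (cMon n σ) ≠ 0 := by
  intro σ hσ
  haveI : Finite ↥(HOct n) := hoct_finite n
  haveI : Nonempty ↥(HOct n) := ⟨1, (HOct n).one_mem⟩
  cases nonempty_fintype ↥(HOct n)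
  intro h0
  have hev : aeval (fun _ => (1:ℚ)) (rho n (cMon n σ)) = 1 := by
    rw [rho, map_smul, finsum_eq_sum_of_fintype, map_sum]
    have h1 : ∀ τ : ↥(HOct n),
        aeval (fun _ => (1:ℚ)) (actXY n (τ : Equiv.Perm ℤ) (cMon n σ)) = 1 := by
      intro τ
      rw [cMon, map_prod, map_prod]
      apply Finset.prod_eq_one
      intro i _
      simp only [map_mul, map_pow, actXY, aeval_X, Sum.elim_inl, Sum.elim_inr, aeval_C,
        Algebra.algebraMap_self, RingHom.id_apply, mul_one]
      rw [← pow_add]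
      obtain ⟨r, hr⟩ := eps_parity hσ i
      rw [hr, ← two_mul, pow_mul, sgnQ_sq, one_pow]
    rw [Finset.sum_congr rfl (fun τ _ => h1 τ), Finset.sum_const, Finset.card_univ,
      nsmul_eq_mul, mul_one, Nat.card_eq_fintype_card, smul_eq_mul]
    rw [inv_mul_cancel₀]
    exact_mod_cast Fintype.card_ne_zero
  rw [h0, map_zero] at hev
  exact one_ne_zero hev.symm
end
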